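/- arXiv:math/0009140 — 4 statements merged into one kernel-verified Lean document; each statement's English description precedes it below -/
import Mathlib

section
/- Let (M,φ) be a compact, connected, oriented Riemannian manifold and (N,ψ) a Riemannian manifold, and let T be a tensor on M×N with components T^i_α(a,x). If the smooth map f: M → N is a solution of the system (E): ∂f^i/∂a^α = T^i_α(a,f(a)) with T nowhere zero along f, then f is a global minimum point of the functional L_T on its domain: for every smooth map g: M → N with ⟨δg, T(·,g(·))⟩ nowhere zero, L_T(f) ≤ L_T(g). -/
/- Coordinate presentation: `φinv a` is the inverse metric `φ^{αβ}` of `M` at `a`,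
`ψ x` the metric `ψ_{ij}` of `N` at `x`, `μ` is the Riemannian volume measure `√φ da`
of the compact oriented `(M,φ)` (a finite measure of full support), `T a x` are the
components `T^i_α(a,x)` of the tensor `T` on `M × N`, and `Df a` are the components
`f^i_α(a) = ∂f^i/∂a^α` of the differential `δf` of the smooth map `f : M → N`.
The pointwise scalar product is `⟨T,S⟩ = φ^{αβ} ψ_{ij} T^i_α S^j_β`. -/

open scoped Manifold
open MeasureTheory

/-- The pointwise scalar product `⟨T,S⟩ = φ^{αβ} ψ_{ij} T^i_α S^j_β`. -/
noncomputable def glProd {m n : ℕ} (φinv : Matrix (Fin m) (Fin m) ℝ)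
    (ψ : Matrix (Fin n) (Fin n) ℝ) (T S : Fin n → Fin m → ℝ) : ℝ :=
  ∑ α : Fin m, ∑ β : Fin m, ∑ i : Fin n, ∑ j : Fin n,
    φinv α β * ψ i j * T i α * S j β

section Aux

open scoped MatrixOrder

variable {m n : ℕ} {A : Matrix (Fin m) (Fin m) ℝ} {B : Matrix (Fin n) (Fin n) ℝ}

lemma quad_nonneg (hB : B.PosSemidef) (w : Fin n → ℝ) :
    0 ≤ ∑ i, ∑ j, B i j * (w i * w j) := by
  have h := hB.dotProduct_mulVec_nonneg w
  simpa [dotProduct, Matrix.mulVec, Finset.mul_sum, mul_comm, mul_assoc,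
    mul_left_comm] using h

lemma quad_pos (hB : B.PosDef) {w : Fin n → ℝ} (hw : w ≠ 0) :
    0 < ∑ i, ∑ j, B i j * (w i * w j) := by
  have h := hB.dotProduct_mulVec_pos hw
  simpa [dotProduct, Matrix.mulVec, Finset.mul_sum, mul_comm, mul_assoc,
    mul_left_comm] using h

lemma posdef_decomp (hA : A.PosDef) :
    ∃ C : Matrix (Fin m) (Fin m) ℝ, (∀ α β, A α β = ∑ γ, C γ α * C γ β) ∧
      Function.Injective C.mulVec := by
  refine ⟨CFC.sqrt A, ?_, ?_⟩
  · have hmul : CFC.sqrt A * CFC.sqrt A = A := CFC.sqrt_mul_sqrt_self A hA.posSemidef.nonneg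
    have hherm := (Matrix.nonneg_iff_posSemidef.mp (CFC.sqrt_nonneg A)).1
    intro α β
    calc A α β = (CFC.sqrt A * CFC.sqrt A) α β := by rw [hmul]
      _ = ∑ γ, CFC.sqrt A α γ * CFC.sqrt A γ β := Matrix.mul_apply
      _ = ∑ γ, CFC.sqrt A γ α * CFC.sqrt A γ β := by
          refine Finset.sum_congr rfl fun γ _ => ?_
          have := hherm.apply α γ
          simp only [star_trivial] at this
          rw [this]
  · refine Matrix.mulVec_injective_iff_isUnit.2 ?_
    refine (Matrix.isUnit_iff_isUnit_det _).2 (isUnit_iff_ne_zero.2 ?_)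
    have hdet : (CFC.sqrt A).det * (CFC.sqrt A).det = A.det := by
      rw [← Matrix.det_mul, CFC.sqrt_mul_sqrt_self A hA.posSemidef.nonneg]
    intro h
    have := hA.det_pos
    rw [← hdet, h, mul_zero] at this
    exact lt_irrefl _ this

lemma glProd_self_repr (C : Matrix (Fin m) (Fin m) ℝ)
    (hrep : ∀ α β, A α β = ∑ γ, C γ α * C γ β) (T : Fin n → Fin m → ℝ) :
    glProd A B T T = ∑ γ, ∑ i, ∑ j, B i j *
      ((∑ α, C γ α * T i α) * (∑ β, C γ β * T j β)) := by
  unfold glProd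
  simp only [hrep, Finset.sum_mul, Finset.mul_sum]
  -- LHS order (α,β,i,j,γ), RHS order (γ,i,j,α,β)
  conv_lhs => enter [2, α, 2, β, 2, i]; rw [Finset.sum_comm]
  conv_lhs => enter [2, α, 2, β]; rw [Finset.sum_comm]
  conv_lhs => enter [2, α]; rw [Finset.sum_comm]
  conv_lhs => rw [Finset.sum_comm]
  conv_lhs => enter [2, γ, 2, α]; rw [Finset.sum_comm]
  conv_lhs => enter [2, γ]; rw [Finset.sum_comm]
  conv_lhs => enter [2, γ, 2, i, 2, α]; rw [Finset.sum_comm]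
  conv_lhs => enter [2, γ, 2, i]; rw [Finset.sum_comm]
  conv_lhs => enter [2, γ, 2, i, 2, j]; rw [Finset.sum_comm]
  refine Finset.sum_congr rfl fun γ _ => Finset.sum_congr rfl fun i _ =>
    Finset.sum_congr rfl fun j _ => Finset.sum_congr rfl fun α _ =>
    Finset.sum_congr rfl fun β _ => by ring

lemma glProd_self_nonneg (hA : A.PosDef) (hB : B.PosDef) (T : Fin n → Fin m → ℝ) :
    0 ≤ glProd A B T T := by
  obtain ⟨C, hrep, -⟩ := posdef_decomp hA
  rw [glProd_self_repr C hrep]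
  exact Finset.sum_nonneg fun γ _ => quad_nonneg hB.posSemidef _

lemma glProd_self_pos (hA : A.PosDef) (hB : B.PosDef) {T : Fin n → Fin m → ℝ}
    (hT : T ≠ 0) : 0 < glProd A B T T := by
  obtain ⟨C, hrep, hinj⟩ := posdef_decomp hA
  rw [glProd_self_repr C hrep]
  obtain ⟨i0, hi0⟩ := Function.ne_iff.mp hT
  have hmv : C.mulVec (T i0) ≠ 0 := by
    intro h
    apply hi0
    have : C.mulVec (T i0) = C.mulVec 0 := by rw [h, Matrix.mulVec_zero]
    simpa using hinj this
  obtain ⟨γ0, hγ0⟩ := Function.ne_iff.mp hmv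
  have hγ0' : (∑ α, C γ0 α * T i0 α) ≠ 0 := by
    simpa [Matrix.mulVec, dotProduct] using hγ0
  refine Finset.sum_pos' (fun γ _ => quad_nonneg hB.posSemidef _) ⟨γ0, Finset.mem_univ _, ?_⟩
  refine quad_pos hB ?_
  intro h
  exact hγ0' (congrFun h i0)

lemma glProd_symm (hA : ∀ a b, A a b = A b a) (hB : ∀ i j, B i j = B j i)
    (T S : Fin n → Fin m → ℝ) : glProd A B T S = glProd A B S T := by
  unfold glProd
  conv_lhs => rw [Finset.sum_comm]
  conv_lhs => enter [2, b, 2, a]; rw [Finset.sum_comm]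
  refine Finset.sum_congr rfl fun b _ => Finset.sum_congr rfl fun a _ =>
    Finset.sum_congr rfl fun j _ => Finset.sum_congr rfl fun i _ => ?_
  rw [hA a b, hB i j]
  ring

lemma glProd_expand (T S : Fin n → Fin m → ℝ) (t : ℝ) :
    glProd A B (T + t • S) (T + t • S) =
      glProd A B T T + t * glProd A B T S + t * glProd A B S T
        + t ^ 2 * glProd A B S S := by
  unfold glProd
  simp only [Pi.add_apply, Pi.smul_apply, smul_eq_mul, Finset.mul_sum,
    ← Finset.sum_add_distrib]
  refine Finset.sum_congr rfl fun α _ => Finset.sum_congr rfl fun β _ =>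
    Finset.sum_congr rfl fun i _ => Finset.sum_congr rfl fun j _ => by ring

lemma glProd_sq_le (hA : A.PosDef) (hB : B.PosDef) (T S : Fin n → Fin m → ℝ) :
    glProd A B T S ^ 2 ≤ glProd A B T T * glProd A B S S := by
  have hsymA : ∀ a b, A a b = A b a := fun a b => by
    have := hA.1.apply a b; simpa [star_trivial] using this.symm
  have hsymB : ∀ i j, B i j = B j i := fun i j => by
    have := hB.1.apply i j; simpa [star_trivial] using this.symm
  have key : ∀ t : ℝ, 0 ≤ glProd A B S S * (t * t) + (2 * glProd A B T S) * t
      + glProd A B T T := by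
    intro t
    have h := glProd_self_nonneg hA hB (T + t • S)
    rw [glProd_expand] at h
    rw [glProd_symm hsymA hsymB S T] at h
    have ht : t * t = t ^ 2 := by ring
    rw [ht]
    linarith
  have hd := discrim_le_zero key
  simp only [discrim] at hd
  nlinarith [hd]

lemma continuous_glProd {X : Type*} [TopologicalSpace X]
    (A : X → Matrix (Fin m) (Fin m) ℝ) (B : X → Matrix (Fin n) (Fin n) ℝ)
    (T S : X → Fin n → Fin m → ℝ)
    (hA : ∀ α β, Continuous fun x => A x α β) (hB : ∀ i j, Continuous fun x => B x i j)
    (hT : ∀ i α, Continuous fun x => T x i α) (hS : ∀ j β, Continuous fun x => S x j β) :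
    Continuous fun x => glProd (A x) (B x) (T x) (S x) := by
  unfold glProd
  refine continuous_finset_sum _ fun α _ => continuous_finset_sum _ fun β _ =>
    continuous_finset_sum _ fun i _ => continuous_finset_sum _ fun j _ => ?_
  exact (((hA α β).mul (hB i j)).mul (hT i α)).mul (hS j β)

end Aux

/-- A solution `f` of the system (E): `δf = T(·,f(·))`, with `T` nowhere
zero along `f`, is a global minimum point of `L_T` on its domain. -/
theorem solution_is_global_minimum {m n : ℕ} {M N : Type*}
    -- (M,φ) a compact, connected, oriented Riemannian manifold
    [TopologicalSpace M] [ChartedSpace (EuclideanSpace ℝ (Fin m)) M]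
    [IsManifold (𝓡 m) (⊤ : ℕ∞) M] [CompactSpace M] [ConnectedSpace M]
    [MeasurableSpace M] [BorelSpace M]
    -- (N,ψ) a Riemannian manifold
    [TopologicalSpace N] [ChartedSpace (EuclideanSpace ℝ (Fin n)) N]
    [IsManifold (𝓡 n) (⊤ : ℕ∞) N]
    (φinv : M → Matrix (Fin m) (Fin m) ℝ)
    (hφpos : ∀ a, (φinv a).PosDef)
    (hφsmooth : ∀ α β, ContMDiff (𝓡 m) 𝓘(ℝ) (⊤ : ℕ∞) fun a => φinv a α β)
    (ψ : N → Matrix (Fin n) (Fin n) ℝ)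
    (hψpos : ∀ x, (ψ x).PosDef)
    (hψsmooth : ∀ i j, ContMDiff (𝓡 n) 𝓘(ℝ) (⊤ : ℕ∞) fun x => ψ x i j)
    -- the Riemannian volume measure √φ da of the compact oriented (M,φ)
    (μ : Measure M) [IsFiniteMeasure μ] [μ.IsOpenPosMeasure]
    -- a tensor T on M × N with components T^i_α(a,x)
    (T : M → N → Fin n → Fin m → ℝ)
    (hT : ∀ i α, ContMDiff ((𝓡 m).prod (𝓡 n)) 𝓘(ℝ) (⊤ : ℕ∞) fun p : M × N => T p.1 p.2 i α)
    -- a smooth map f : M → N, with the components Df = (f^i_α) of its differential δf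
    (f : M → N) (hf : ContMDiff (𝓡 m) (𝓡 n) (⊤ : ℕ∞) f)
    (Df : M → Fin n → Fin m → ℝ)
    (hDf : ∀ i α, ContMDiff (𝓡 m) 𝓘(ℝ) (⊤ : ℕ∞) fun a => Df a i α)
    -- T(a, f(a)) is nowhere zero along f
    (hTnz : ∀ a : M, T a (f a) ≠ 0)
    -- f is a solution of the system (E): ∂f^i/∂a^α = T^i_α(a, f(a)), i.e. δf = T along f
    (hE : ∀ a : M, Df a = T a (f a)) :
    -- for every smooth map g (with differential components Dg) in the domain of L_T
    ∀ (g : M → N), ContMDiff (𝓡 m) (𝓡 n) (⊤ : ℕ∞) g →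
      ∀ (Dg : M → Fin n → Fin m → ℝ),
        (∀ i α, ContMDiff (𝓡 m) 𝓘(ℝ) (⊤ : ℕ∞) fun a => Dg a i α) →
        (∀ a : M, glProd (φinv a) (ψ (g a)) (Dg a) (T a (g a)) ≠ 0) →
        (1 / 2 : ℝ) * ∫ a, (glProd (φinv a) (ψ (f a)) (Df a) (Df a) *
        glProd (φinv a) (ψ (f a)) (T a (f a)) (T a (f a))) /
        (glProd (φinv a) (ψ (f a)) (Df a) (T a (f a))) ^ 2 ∂μ ≤
          (1 / 2 : ℝ) * ∫ a, (glProd (φinv a) (ψ (g a)) (Dg a) (Dg a) *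
        glProd (φinv a) (ψ (g a)) (T a (g a)) (T a (g a))) /
        (glProd (φinv a) (ψ (g a)) (Dg a) (T a (g a))) ^ 2 ∂μ := by
  
  intro g hg Dg hDg hden
  -- the integrand of `L_T f` is constantly 1
  have hf1 : (fun a => (glProd (φinv a) (ψ (f a)) (Df a) (Df a) *
      glProd (φinv a) (ψ (f a)) (T a (f a)) (T a (f a))) /
      (glProd (φinv a) (ψ (f a)) (Df a) (T a (f a))) ^ 2) = fun _ => (1 : ℝ) := by
    funext a
    have hq : 0 < glProd (φinv a) (ψ (f a)) (T a (f a)) (T a (f a)) :=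
      glProd_self_pos (hφpos a) (hψpos (f a)) (hTnz a)
    rw [hE a, sq, div_self (by positivity)]
  -- the integrand of `L_T g` is at least 1
  have hg1 : ∀ a, (1 : ℝ) ≤ (glProd (φinv a) (ψ (g a)) (Dg a) (Dg a) *
      glProd (φinv a) (ψ (g a)) (T a (g a)) (T a (g a))) /
      (glProd (φinv a) (ψ (g a)) (Dg a) (T a (g a))) ^ 2 := by
    intro a
    have hd2 : 0 < (glProd (φinv a) (ψ (g a)) (Dg a) (T a (g a))) ^ 2 :=
      lt_of_le_of_ne (sq_nonneg _) (Ne.symm (pow_ne_zero 2 (hden a)))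
    rw [le_div_iff₀ hd2, one_mul]
    exact glProd_sq_le (hφpos a) (hψpos (g a)) (Dg a) (T a (g a))
  -- continuity (hence integrability) of the integrand of `L_T g`
  have hTg : ∀ i α, Continuous fun a => T a (g a) i α := fun i α =>
    ((hT i α).continuous).comp (continuous_id.prodMk hg.continuous)
  have hnum : Continuous fun a => glProd (φinv a) (ψ (g a)) (Dg a) (Dg a) *
      glProd (φinv a) (ψ (g a)) (T a (g a)) (T a (g a)) := by
    refine Continuous.mul ?_ ?_ <;>
      exact continuous_glProd _ _ _ _ (fun α β => (hφsmooth α β).continuous)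
        (fun i j => ((hψsmooth i j).continuous).comp hg.continuous)
        (by first | exact fun i α => (hDg i α).continuous | exact hTg) (by first | exact fun i α => (hDg i α).continuous | exact hTg)
  have hdenc : Continuous fun a => (glProd (φinv a) (ψ (g a)) (Dg a) (T a (g a))) ^ 2 := by
    exact (continuous_glProd _ _ _ _ (fun α β => (hφsmooth α β).continuous)
      (fun i j => ((hψsmooth i j).continuous).comp hg.continuous)
      (fun i α => (hDg i α).continuous) hTg).pow 2
  have hGcont : Continuous fun a => (glProd (φinv a) (ψ (g a)) (Dg a) (Dg a) *
      glProd (φinv a) (ψ (g a)) (T a (g a)) (T a (g a))) /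
      (glProd (φinv a) (ψ (g a)) (Dg a) (T a (g a))) ^ 2 :=
    hnum.div hdenc fun a => pow_ne_zero 2 (hden a)
  have hGint : Integrable (fun a => (glProd (φinv a) (ψ (g a)) (Dg a) (Dg a) *
      glProd (φinv a) (ψ (g a)) (T a (g a)) (T a (g a))) /
      (glProd (φinv a) (ψ (g a)) (Dg a) (T a (g a))) ^ 2) μ := by
    refine hGcont.integrable_of_hasCompactSupport ?_
    exact IsCompact.of_isClosed_subset isCompact_univ (isClosed_tsupport _) (Set.subset_univ _)
  have hint : ∫ a, (1 : ℝ) ∂μ ≤ ∫ a, (glProd (φinv a) (ψ (g a)) (Dg a) (Dg a) *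
      glProd (φinv a) (ψ (g a)) (T a (g a)) (T a (g a))) /
      (glProd (φinv a) (ψ (g a)) (Dg a) (T a (g a))) ^ 2 ∂μ :=
    integral_mono (integrable_const 1) hGint hg1
  rw [hf1]
  have h2 : (0:ℝ) < 1/2 := by norm_num
  exact mul_le_mul_of_nonneg_left hint (le_of_lt h2)
end

section
/- Let (M,φ) be a compact, connected, oriented Riemannian manifold and (N,ψ) a Riemannian manifold, and let T be a tensor on M×N with components T^i_α(a,x). If a smooth map f: M → N in the domain of L_T attains the global minimum value, i.e. L_T(f) = (1/2) Vol_φ(M), then there exists a nowhere-vanishing smooth function K ∈ F(M) such that δf = K·T along f, i.e. ∂f^i/∂a^α (a) = K(a) T^i_α(a,f(a)) for all a ∈ M. -/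
/- Coordinate presentation: `φinv a` is the inverse metric `φ^{αβ}` of `M` at `a`,
`ψ x` the metric `ψ_{ij}` of `N` at `x`, `μ` is the Riemannian volume measure `√φ da`
of the compact oriented `(M,φ)` (a finite measure of full support), `T a x` are the
components `T^i_α(a,x)` of the tensor `T` on `M × N`, and `Df a` are the components
`f^i_α(a) = ∂f^i/∂a^α` of the differential `δf` of the smooth map `f : M → N`.
The pointwise scalar product is `⟨T,S⟩ = φ^{αβ} ψ_{ij} T^i_α S^j_β`. -/

open scoped Manifold
open MeasureTheory

namespace GlAux
open Matrix

variable {m n : ℕ} (φ : Matrix (Fin m) (Fin m) ℝ) (ψ : Matrix (Fin n) (Fin n) ℝ)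

lemma sum_reorder (F : Fin m → Fin m → Fin n → Fin n → ℝ) :
    ∑ α, ∑ β, ∑ i, ∑ j, F α β i j = ∑ i, ∑ α, ∑ β, ∑ j, F α β i j :=
  calc ∑ α, ∑ β, ∑ i, ∑ j, F α β i j
      = ∑ α, ∑ i, ∑ β, ∑ j, F α β i j :=
        Finset.sum_congr rfl fun α _ => Finset.sum_comm
    _ = ∑ i, ∑ α, ∑ β, ∑ j, F α β i j := Finset.sum_comm

lemma glProd_eq_trace (x y : Fin n → Fin m → ℝ) :
    glProd φ ψ x y = Matrix.trace (ψ * Matrix.of y * φᵀ * (Matrix.of x)ᵀ) := by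
  rw [glProd, sum_reorder]
  simp only [Matrix.trace, Matrix.diag_apply, Matrix.mul_apply, Matrix.transpose_apply,
    Matrix.of_apply, Finset.sum_mul]
  refine Finset.sum_congr rfl fun i _ => Finset.sum_congr rfl fun α _ =>
    Finset.sum_congr rfl fun β _ => Finset.sum_congr rfl fun j _ => ?_
  ring


lemma trace_mul_transpose_self (A : Matrix (Fin n) (Fin m) ℝ) :
    Matrix.trace (A * Aᵀ) = ∑ i, ∑ α, (A i α) ^ 2 := by
  simp [Matrix.trace, Matrix.mul_apply, Matrix.diag_apply, sq]

variable {φ ψ}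

open scoped MatrixOrder in
lemma glProd_self_decomp (hφ : φ.PosDef) (hψ : ψ.PosDef) (x : Fin n → Fin m → ℝ) :
    ∃ A : Matrix (Fin n) (Fin m) ℝ, (x ≠ 0 → A ≠ 0) ∧
      glProd φ ψ x x = ∑ i, ∑ α, (A i α) ^ 2 := by
  set R := CFC.sqrt φ with hRdef
  set S := CFC.sqrt ψ with hSdef
  have hR : R * R = φ := CFC.sqrt_mul_sqrt_self φ hφ.posSemidef.nonneg
  have hS : S * S = ψ := CFC.sqrt_mul_sqrt_self ψ hψ.posSemidef.nonneg
  have hRt : Rᵀ = R := by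
    rw [← Matrix.conjTranspose_eq_transpose_of_trivial]
    exact (CFC.sqrt_nonneg φ).posSemidef.isHermitian
  have hSt : Sᵀ = S := by
    rw [← Matrix.conjTranspose_eq_transpose_of_trivial]
    exact (CFC.sqrt_nonneg ψ).posSemidef.isHermitian
  have hdetR : R.det ≠ 0 := by
    intro h
    have := hφ.det_pos
    rw [← hR, Matrix.det_mul, h, mul_zero] at this
    exact lt_irrefl _ this
  have hdetS : S.det ≠ 0 := by
    intro h
    have := hψ.det_pos
    rw [← hS, Matrix.det_mul, h, mul_zero] at this
    exact lt_irrefl _ this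
  have hφt : φᵀ = φ := by
    rw [← Matrix.conjTranspose_eq_transpose_of_trivial]
    exact hφ.isHermitian
  refine ⟨S * Matrix.of x * R, ?_, ?_⟩
  · intro hx h
    apply hx
    have h1 : Matrix.of x * R = 0 := by
      have h' := congrArg (fun B => S⁻¹ * B) h
      simp only [Matrix.mul_zero] at h'
      rw [← h']
      simp [← Matrix.mul_assoc, Matrix.nonsing_inv_mul S (isUnit_iff_ne_zero.mpr hdetS)]
    have h2 : Matrix.of x = 0 := by
      have h' := congrArg (fun B => B * R⁻¹) h1
      simp only [Matrix.zero_mul] at h'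
      rw [← h']
      simp [Matrix.mul_assoc, Matrix.mul_nonsing_inv R (isUnit_iff_ne_zero.mpr hdetR)]
    funext i α
    exact congrFun (congrFun h2 i) α
  · rw [glProd_eq_trace, hφt, ← hR, ← hS, ← trace_mul_transpose_self]
    have hT : (S * Matrix.of x * R)ᵀ = R * (Matrix.of x)ᵀ * S := by
      simp [Matrix.transpose_mul, hRt, hSt, Matrix.mul_assoc]
    rw [hT]
    rw [show S * S * Matrix.of x * (R * R) * (Matrix.of x)ᵀ =
      S * (S * Matrix.of x * R * (R * (Matrix.of x)ᵀ)) by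
        simp [Matrix.mul_assoc]]
    rw [Matrix.trace_mul_comm]
    simp [Matrix.mul_assoc]

lemma glProd_self_nonneg (hφ : φ.PosDef) (hψ : ψ.PosDef) (x : Fin n → Fin m → ℝ) :
    0 ≤ glProd φ ψ x x := by
  obtain ⟨A, -, hA⟩ := glProd_self_decomp hφ hψ x
  rw [hA]
  exact Finset.sum_nonneg fun _ _ => Finset.sum_nonneg fun _ _ => sq_nonneg _

lemma glProd_self_pos (hφ : φ.PosDef) (hψ : ψ.PosDef) {x : Fin n → Fin m → ℝ}
    (hx : x ≠ 0) : 0 < glProd φ ψ x x := by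
  obtain ⟨A, hAne, hA⟩ := glProd_self_decomp hφ hψ x
  rw [hA]
  have hnn : (0:ℝ) ≤ ∑ i, ∑ α, (A i α) ^ 2 :=
    Finset.sum_nonneg fun i _ => Finset.sum_nonneg fun α _ => sq_nonneg _
  rcases hnn.lt_or_eq with h | h
  · exact h
  · exfalso
    apply hAne hx
    funext i α
    have h1 := (Finset.sum_eq_zero_iff_of_nonneg
      (fun i _ => Finset.sum_nonneg fun α _ => sq_nonneg (A i α))).mp h.symm i (Finset.mem_univ i)
    have h2 := (Finset.sum_eq_zero_iff_of_nonneg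
      (fun α _ => sq_nonneg (A i α))).mp h1 α (Finset.mem_univ α)
    exact pow_eq_zero_iff (two_ne_zero) |>.mp h2


lemma glProd_symm (hφt : φᵀ = φ) (hψt : ψᵀ = ψ) (x y : Fin n → Fin m → ℝ) :
    glProd φ ψ x y = glProd φ ψ y x := by
  have hφ' : ∀ α β, φ α β = φ β α := fun α β => by
    conv_lhs => rw [← hφt]
    simp
  have hψ' : ∀ i j, ψ i j = ψ j i := fun i j => by
    conv_lhs => rw [← hψt]
    simp
  rw [glProd, glProd, Finset.sum_comm]
  refine Finset.sum_congr rfl fun α _ => Finset.sum_congr rfl fun β _ => ?_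
  rw [Finset.sum_comm]
  refine Finset.sum_congr rfl fun i _ => Finset.sum_congr rfl fun j _ => ?_
  rw [hφ' β α, hψ' j i]
  ring

lemma glProd_smul_left (c : ℝ) (x y : Fin n → Fin m → ℝ) :
    glProd φ ψ (c • x) y = c * glProd φ ψ x y := by
  simp only [glProd, Pi.smul_apply, smul_eq_mul, Finset.mul_sum]
  refine Finset.sum_congr rfl fun α _ => Finset.sum_congr rfl fun β _ =>
    Finset.sum_congr rfl fun i _ => Finset.sum_congr rfl fun j _ => ?_
  ring

lemma glProd_sub_left (x x' y : Fin n → Fin m → ℝ) :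
    glProd φ ψ (x - x') y = glProd φ ψ x y - glProd φ ψ x' y := by
  simp only [glProd, Pi.sub_apply, ← Finset.sum_sub_distrib]
  refine Finset.sum_congr rfl fun α _ => Finset.sum_congr rfl fun β _ =>
    Finset.sum_congr rfl fun i _ => Finset.sum_congr rfl fun j _ => ?_
  ring

lemma glProd_smul_right (c : ℝ) (x y : Fin n → Fin m → ℝ) :
    glProd φ ψ x (c • y) = c * glProd φ ψ x y := by
  simp only [glProd, Pi.smul_apply, smul_eq_mul, Finset.mul_sum]
  refine Finset.sum_congr rfl fun α _ => Finset.sum_congr rfl fun β _ =>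
    Finset.sum_congr rfl fun i _ => Finset.sum_congr rfl fun j _ => ?_
  ring

lemma glProd_sub_right (x y y' : Fin n → Fin m → ℝ) :
    glProd φ ψ x (y - y') = glProd φ ψ x y - glProd φ ψ x y' := by
  simp only [glProd, Pi.sub_apply, ← Finset.sum_sub_distrib]
  refine Finset.sum_congr rfl fun α _ => Finset.sum_congr rfl fun β _ =>
    Finset.sum_congr rfl fun i _ => Finset.sum_congr rfl fun j _ => ?_
  ring

lemma glProd_expand (hφt : φᵀ = φ) (hψt : ψᵀ = ψ) (a b : ℝ) (x y : Fin n → Fin m → ℝ) :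
    glProd φ ψ (a • x - b • y) (a • x - b • y) =
      a ^ 2 * glProd φ ψ x x - 2 * a * b * glProd φ ψ x y + b ^ 2 * glProd φ ψ y y := by
  rw [glProd_sub_left, glProd_smul_left, glProd_smul_left,
    glProd_sub_right, glProd_sub_right, glProd_smul_right, glProd_smul_right,
    glProd_smul_right, glProd_smul_right, glProd_symm hφt hψt y x]
  ring

variable (hφ : φ.PosDef) (hψ : ψ.PosDef)
include hφ hψ

lemma glProd_sq_le (x y : Fin n → Fin m → ℝ) :
    glProd φ ψ x y ^ 2 ≤ glProd φ ψ x x * glProd φ ψ y y := by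
  have hφt : φᵀ = φ := by
    rw [← Matrix.conjTranspose_eq_transpose_of_trivial]; exact hφ.isHermitian
  have hψt : ψᵀ = ψ := by
    rw [← Matrix.conjTranspose_eq_transpose_of_trivial]; exact hψ.isHermitian
  by_cases hy : y = 0
  · subst hy
    simp [glProd]
  · have hyy : 0 < glProd φ ψ y y := glProd_self_pos hφ hψ hy
    have h0 : 0 ≤ glProd φ ψ (glProd φ ψ y y • x - glProd φ ψ x y • y)
        (glProd φ ψ y y • x - glProd φ ψ x y • y) := glProd_self_nonneg hφ hψ _
    rw [glProd_expand hφt hψt] at h0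
    nlinarith [hyy, h0]

lemma glProd_cs_eq {x y : Fin n → Fin m → ℝ} (hy : y ≠ 0)
    (heq : glProd φ ψ x y ^ 2 = glProd φ ψ x x * glProd φ ψ y y) :
    x = (glProd φ ψ x y / glProd φ ψ y y) • y := by
  have hφt : φᵀ = φ := by
    rw [← Matrix.conjTranspose_eq_transpose_of_trivial]; exact hφ.isHermitian
  have hψt : ψᵀ = ψ := by
    rw [← Matrix.conjTranspose_eq_transpose_of_trivial]; exact hψ.isHermitian
  have hyy : 0 < glProd φ ψ y y := glProd_self_pos hφ hψ hy
  set w := glProd φ ψ y y • x - glProd φ ψ x y • y with hw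
  have hww : glProd φ ψ w w = 0 := by
    rw [hw, glProd_expand hφt hψt]
    nlinarith [heq]
  have hw0 : w = 0 := by
    by_contra hw0
    exact (glProd_self_pos hφ hψ hw0).ne' hww
  have : glProd φ ψ y y • x = glProd φ ψ x y • y := sub_eq_zero.mp hw0
  have := congrArg (fun z => (glProd φ ψ y y)⁻¹ • z) this
  simpa [smul_smul, inv_mul_cancel₀ hyy.ne', div_eq_inv_mul] using this

end GlAux

/-- If a smooth map `f` in the domain of `L_T` attains the global minimum
value `(1/2) Vol_φ(M)`, then `δf = K·T` along `f` for some nowhere-vanishing smooth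
`K ∈ F(M)`. -/
theorem minimum_implies_proportional {m n : ℕ} {M N : Type*}
    -- (M,φ) a compact, connected, oriented Riemannian manifold
    [TopologicalSpace M] [ChartedSpace (EuclideanSpace ℝ (Fin m)) M]
    [IsManifold (𝓡 m) (⊤ : ℕ∞) M] [CompactSpace M] [ConnectedSpace M]
    [MeasurableSpace M] [BorelSpace M]
    -- (N,ψ) a Riemannian manifold
    [TopologicalSpace N] [ChartedSpace (EuclideanSpace ℝ (Fin n)) N]
    [IsManifold (𝓡 n) (⊤ : ℕ∞) N]
    (φinv : M → Matrix (Fin m) (Fin m) ℝ)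
    (hφpos : ∀ a, (φinv a).PosDef)
    (hφsmooth : ∀ α β, ContMDiff (𝓡 m) 𝓘(ℝ) (⊤ : ℕ∞) fun a => φinv a α β)
    (ψ : N → Matrix (Fin n) (Fin n) ℝ)
    (hψpos : ∀ x, (ψ x).PosDef)
    (hψsmooth : ∀ i j, ContMDiff (𝓡 n) 𝓘(ℝ) (⊤ : ℕ∞) fun x => ψ x i j)
    -- the Riemannian volume measure √φ da of the compact oriented (M,φ)
    (μ : Measure M) [IsFiniteMeasure μ] [μ.IsOpenPosMeasure]
    -- a tensor T on M × N with components T^i_α(a,x)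
    (T : M → N → Fin n → Fin m → ℝ)
    (hT : ∀ i α, ContMDiff ((𝓡 m).prod (𝓡 n)) 𝓘(ℝ) (⊤ : ℕ∞) fun p : M × N => T p.1 p.2 i α)
    -- a smooth map f : M → N, with the components Df = (f^i_α) of its differential δf
    (f : M → N) (hf : ContMDiff (𝓡 m) (𝓡 n) (⊤ : ℕ∞) f)
    (Df : M → Fin n → Fin m → ℝ)
    (hDf : ∀ i α, ContMDiff (𝓡 m) 𝓘(ℝ) (⊤ : ℕ∞) fun a => Df a i α)
    -- f is in the domain of L_T : ⟨δf, T(·,f(·))⟩ is nowhere zero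
    (hne : ∀ a : M, glProd (φinv a) (ψ (f a)) (Df a) (T a (f a)) ≠ 0)
    -- f attains the global minimum value L_T(f) = (1/2) Vol_φ(M)
    (hmin : (1 / 2 : ℝ) * ∫ a, (glProd (φinv a) (ψ (f a)) (Df a) (Df a) *
        glProd (φinv a) (ψ (f a)) (T a (f a)) (T a (f a))) /
        (glProd (φinv a) (ψ (f a)) (Df a) (T a (f a))) ^ 2 ∂μ =
      (1 / 2 : ℝ) * (μ Set.univ).toReal) :
    -- then δf = K·T along f for some nowhere-vanishing smooth K ∈ F(M)
    ∃ K : M → ℝ, ContMDiff (𝓡 m) 𝓘(ℝ) (⊤ : ℕ∞) K ∧ (∀ a : M, K a ≠ 0) ∧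
      ∀ a : M, Df a = K a • T a (f a) := by
  classical
  have hTf : ∀ i α, ContMDiff (𝓡 m) 𝓘(ℝ) (⊤ : ℕ∞) fun a => T a (f a) i α := fun i α =>
    (hT i α).comp (contMDiff_id.prodMk hf)
  have hglsmooth : ∀ (u v : M → Fin n → Fin m → ℝ),
      (∀ i α, ContMDiff (𝓡 m) 𝓘(ℝ) (⊤ : ℕ∞) fun a => u a i α) →
      (∀ i α, ContMDiff (𝓡 m) 𝓘(ℝ) (⊤ : ℕ∞) fun a => v a i α) →
      ContMDiff (𝓡 m) 𝓘(ℝ) (⊤ : ℕ∞) fun a => glProd (φinv a) (ψ (f a)) (u a) (v a) := by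
    intro u v hu hv
    simp only [glProd]
    refine contMDiff_finset_sum fun α _ => contMDiff_finset_sum fun β _ =>
      contMDiff_finset_sum fun i _ => contMDiff_finset_sum fun j _ => ?_
    exact (((hφsmooth α β).mul ((hψsmooth i j).comp hf)).mul (hu i α)).mul (hv j β)
  have hgD := hglsmooth Df Df hDf hDf
  have hgT := hglsmooth (fun a => T a (f a)) (fun a => T a (f a)) hTf hTf
  have hgDT := hglsmooth Df (fun a => T a (f a)) hDf hTf
  have hTne : ∀ a, T a (f a) ≠ 0 := by
    intro a h
    apply hne a
    rw [h]
    simp [glProd]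
  have hgTpos : ∀ a, 0 < glProd (φinv a) (ψ (f a)) (T a (f a)) (T a (f a)) :=
    fun a => GlAux.glProd_self_pos (hφpos a) (hψpos (f a)) (hTne a)
  have hg : ContMDiff (𝓡 m) 𝓘(ℝ) (⊤ : ℕ∞) fun a =>
      (glProd (φinv a) (ψ (f a)) (Df a) (Df a) *
        glProd (φinv a) (ψ (f a)) (T a (f a)) (T a (f a))) /
        (glProd (φinv a) (ψ (f a)) (Df a) (T a (f a))) ^ 2 :=
    (hgD.mul hgT).div₀ ((contMDiff_pow 2).comp hgDT) fun a => pow_ne_zero 2 (hne a)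
  have hgcont : Continuous (fun a =>
      (glProd (φinv a) (ψ (f a)) (Df a) (Df a) *
        glProd (φinv a) (ψ (f a)) (T a (f a)) (T a (f a))) /
        (glProd (φinv a) (ψ (f a)) (Df a) (T a (f a))) ^ 2) := hg.continuous
  have h1le : ∀ a, 1 ≤ (glProd (φinv a) (ψ (f a)) (Df a) (Df a) *
        glProd (φinv a) (ψ (f a)) (T a (f a)) (T a (f a))) /
        (glProd (φinv a) (ψ (f a)) (Df a) (T a (f a))) ^ 2 := by
    intro a
    have hsq : 0 < glProd (φinv a) (ψ (f a)) (Df a) (T a (f a)) ^ 2 :=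
      lt_of_le_of_ne (sq_nonneg _) (Ne.symm (pow_ne_zero 2 (hne a)))
    exact (one_le_div hsq).mpr (GlAux.glProd_sq_le (hφpos a) (hψpos (f a)) _ _)
  have hint : Integrable (fun a =>
      (glProd (φinv a) (ψ (f a)) (Df a) (Df a) *
        glProd (φinv a) (ψ (f a)) (T a (f a)) (T a (f a))) /
        (glProd (φinv a) (ψ (f a)) (Df a) (T a (f a))) ^ 2) μ := by
    obtain ⟨C, hC⟩ := isCompact_univ.exists_bound_of_continuousOn hgcont.continuousOn
    exact ⟨hgcont.aestronglyMeasurable,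
      HasFiniteIntegral.of_bounded (C := C)
        (Filter.Eventually.of_forall fun a => hC a (Set.mem_univ a))⟩
  have hI : ∫ a, (glProd (φinv a) (ψ (f a)) (Df a) (Df a) *
        glProd (φinv a) (ψ (f a)) (T a (f a)) (T a (f a))) /
        (glProd (φinv a) (ψ (f a)) (Df a) (T a (f a))) ^ 2 ∂μ = (μ Set.univ).toReal :=
    mul_left_cancel₀ (by norm_num : (1/2 : ℝ) ≠ 0) hmin
  have heq0 : ∫ a, ((glProd (φinv a) (ψ (f a)) (Df a) (Df a) *
        glProd (φinv a) (ψ (f a)) (T a (f a)) (T a (f a))) /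
        (glProd (φinv a) (ψ (f a)) (Df a) (T a (f a))) ^ 2 - 1) ∂μ = 0 := by
    rw [integral_sub hint (integrable_const 1), integral_const, smul_eq_mul, mul_one, hI,
      measureReal_def, sub_self]
  have hae : (fun a => (glProd (φinv a) (ψ (f a)) (Df a) (Df a) *
        glProd (φinv a) (ψ (f a)) (T a (f a)) (T a (f a))) /
        (glProd (φinv a) (ψ (f a)) (Df a) (T a (f a))) ^ 2 - 1) =ᵐ[μ] 0 :=
    (integral_eq_zero_iff_of_nonneg (fun a => sub_nonneg.mpr (h1le a))
      (hint.sub (integrable_const 1))).mp heq0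
  have hfun := (Continuous.ae_eq_iff_eq μ (hgcont.sub continuous_const) continuous_zero).mp hae
  have hg1 : ∀ a, glProd (φinv a) (ψ (f a)) (Df a) (Df a) *
        glProd (φinv a) (ψ (f a)) (T a (f a)) (T a (f a)) =
        glProd (φinv a) (ψ (f a)) (Df a) (T a (f a)) ^ 2 := by
    intro a
    have h := congrFun hfun a
    simp only [Pi.zero_apply, Pi.sub_apply, sub_eq_zero] at h
    exact (div_eq_one_iff_eq (pow_ne_zero 2 (hne a))).mp h
  refine ⟨fun a => glProd (φinv a) (ψ (f a)) (Df a) (T a (f a)) /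
      glProd (φinv a) (ψ (f a)) (T a (f a)) (T a (f a)), ?_, ?_, ?_⟩
  · exact hgDT.div₀ hgT fun a => (hgTpos a).ne'
  · exact fun a => div_ne_zero (hne a) (hgTpos a).ne'
  · intro a
    exact GlAux.glProd_cs_eq (hφpos a) (hψpos (f a)) (hTne a) (hg1 a).symm
end

section
/- Let (M,φ) be a compact, connected, oriented Riemannian manifold and A a smooth 1-form on M. If f ∈ F(M) is a smooth real-valued function solving the Pfaff system df = A, with A(grad_φ f) nowhere zero (equivalently A nowhere zero along the solution), then f realizes the global minimum of the functional L_A(g) = (1/2) ∫_M (‖A‖²_φ / [A(grad_φ g)]²) φ^{αβ} g_α g_β √φ da among smooth g with A(grad_φ g) nowhere zero, and L_A(f) = (1/2) Vol_φ(M). -/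
/- STATEMENT 6.
Coordinate presentation: `φinv a` is the inverse metric `φ^{αβ}` of the compact, connected,
oriented Riemannian manifold `(M,φ)` at `a`, `μ` its Riemannian volume measure `√φ da`,
`A a` the components `A_α(a)` of a smooth 1-form, and `Df a` the components
`f_α(a) = ∂f/∂a^α` of the differential of `f ∈ F(M)`.  Then
`A(grad_φ g) = φ^{αβ} A_α g_β` and `‖A‖²_φ = φ^{αβ} A_α A_β`. -/

open scoped Manifold
open MeasureTheory

/-- The scalar product `φ^{αβ} u_α v_β` of two covectors, `φinv` being `φ^{αβ}`. -/
noncomputable def coProd {m : ℕ} (φinv : Matrix (Fin m) (Fin m) ℝ)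
    (u v : Fin m → ℝ) : ℝ :=
  ∑ α : Fin m, ∑ β : Fin m, φinv α β * u α * v β

lemma coProd_symm' {m : ℕ} {φ : Matrix (Fin m) (Fin m) ℝ} (h : φ.IsHermitian)
    (u v : Fin m → ℝ) : coProd φ u v = coProd φ v u := by
  unfold coProd
  rw [Finset.sum_comm]
  refine Finset.sum_congr rfl fun α _ => Finset.sum_congr rfl fun β _ => ?_
  have h2 : φ β α = φ α β := by simpa using h.apply α β
  rw [h2]; ring

lemma coProd_nonneg' {m : ℕ} {φ : Matrix (Fin m) (Fin m) ℝ} (h : φ.PosSemidef)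
    (u : Fin m → ℝ) : 0 ≤ coProd φ u u := by
  have := h.dotProduct_mulVec_nonneg u
  simp only [dotProduct, Matrix.mulVec, RCLike.re_to_real] at this
  convert this using 1
  · rfl
  unfold coProd
  simp only [dotProduct, Finset.mul_sum, Finset.sum_mul, star_trivial]
  rw [Finset.sum_comm]
  refine Finset.sum_congr rfl fun α _ => Finset.sum_congr rfl fun β _ => ?_
  have h2 : φ β α = φ α β := by simpa using h.1.apply α β
  rw [h2]; ring

lemma coProd_add_left' {m : ℕ} (φ : Matrix (Fin m) (Fin m) ℝ) (u v w : Fin m → ℝ) :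
    coProd φ (u + v) w = coProd φ u w + coProd φ v w := by
  unfold coProd
  rw [← Finset.sum_add_distrib]
  refine Finset.sum_congr rfl fun α _ => ?_
  rw [← Finset.sum_add_distrib]
  exact Finset.sum_congr rfl fun β _ => by simp; ring

lemma coProd_smul_left' {m : ℕ} (φ : Matrix (Fin m) (Fin m) ℝ) (c : ℝ) (u w : Fin m → ℝ) :
    coProd φ (c • u) w = c * coProd φ u w := by
  unfold coProd
  rw [Finset.mul_sum]
  refine Finset.sum_congr rfl fun α _ => ?_
  rw [Finset.mul_sum]
  exact Finset.sum_congr rfl fun β _ => by simp; ring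

/-- Cauchy–Schwarz for a positive semidefinite bilinear form. -/
lemma coProd_cs' {m : ℕ} {φ : Matrix (Fin m) (Fin m) ℝ} (h : φ.PosSemidef)
    (u v : Fin m → ℝ) : (coProd φ u v) ^ 2 ≤ coProd φ u u * coProd φ v v := by
  have key : ∀ t : ℝ, 0 ≤ coProd φ v v * (t * t) + (2 * coProd φ u v) * t + coProd φ u u := by
    intro t
    have h0 := coProd_nonneg' h (u + t • v)
    have e1 : coProd φ (u + t • v) (u + t • v)
        = coProd φ v v * (t * t) + (2 * coProd φ u v) * t + coProd φ u u := by
      rw [coProd_add_left']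
      rw [coProd_symm' h.1 u (u + t • v), coProd_symm' h.1 (t • v) (u + t • v)]
      rw [coProd_add_left', coProd_add_left']
      rw [coProd_smul_left', coProd_smul_left']
      rw [coProd_symm' h.1 u (t • v), coProd_symm' h.1 v (t • v)]
      rw [coProd_smul_left', coProd_smul_left']
      rw [coProd_symm' h.1 v u]
      ring
    linarith [e1 ▸ h0]
  have := discrim_le_zero key
  unfold discrim at this
  nlinarith [this]

lemma coProd_continuous' {m : ℕ} {M : Type*} [TopologicalSpace M]
    {φ : M → Matrix (Fin m) (Fin m) ℝ} {u v : M → Fin m → ℝ}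
    (hφ : ∀ α β, Continuous fun a => φ a α β)
    (hu : ∀ α, Continuous fun a => u a α) (hv : ∀ α, Continuous fun a => v a α) :
    Continuous fun a => coProd (φ a) (u a) (v a) := by
  unfold coProd
  refine continuous_finset_sum _ fun α _ => continuous_finset_sum _ fun β _ => ?_
  exact ((hφ α β).mul (hu α)).mul (hv β)

/-- A solution `f ∈ F(M)` of the Pfaff system `df = A`, with
`A(grad_φ f)` nowhere zero, realizes the global minimum of
`L_A(g) = (1/2)∫_M (‖A‖²_φ/[A(grad_φ g)]²) φ^{αβ} g_α g_β √φ da`, and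
`L_A(f) = (1/2) Vol_φ(M)`. -/
theorem pfaff_solution_minimizes {m : ℕ} {M : Type*}
    -- (M,φ) a compact, connected, oriented Riemannian manifold
    [TopologicalSpace M] [ChartedSpace (EuclideanSpace ℝ (Fin m)) M]
    [IsManifold (𝓡 m) (⊤ : ℕ∞) M] [CompactSpace M] [ConnectedSpace M]
    [MeasurableSpace M] [BorelSpace M]
    (φinv : M → Matrix (Fin m) (Fin m) ℝ)
    (hφpos : ∀ a, (φinv a).PosDef)
    (hφsmooth : ∀ α β, ContMDiff (𝓡 m) 𝓘(ℝ) (⊤ : ℕ∞) fun a => φinv a α β)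
    -- the Riemannian volume measure √φ da of the compact oriented (M,φ)
    (μ : Measure M) [IsFiniteMeasure μ] [μ.IsOpenPosMeasure]
    -- A a smooth 1-form on M
    (A : M → Fin m → ℝ)
    (hA : ∀ α, ContMDiff (𝓡 m) 𝓘(ℝ) (⊤ : ℕ∞) fun a => A a α)
    -- f ∈ F(M) a smooth real-valued function, with the components Df = (f_α) of df
    (f : M → ℝ) (hf : ContMDiff (𝓡 m) 𝓘(ℝ) (⊤ : ℕ∞) f)
    (Df : M → Fin m → ℝ)
    (hDf : ∀ α, ContMDiff (𝓡 m) 𝓘(ℝ) (⊤ : ℕ∞) fun a => Df a α)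
    -- f solves the Pfaff system df = A
    (hE : ∀ a : M, Df a = A a)
    -- A(grad_φ f) nowhere zero (equivalently, A nowhere zero along the solution)
    (hne : ∀ a : M, coProd (φinv a) (A a) (Df a) ≠ 0) :
    (1 / 2 : ℝ) * ∫ a, (coProd (φinv a) (A a) (A a) /
          (coProd (φinv a) (A a) (Df a)) ^ 2) * coProd (φinv a) (Df a) (Df a) ∂μ =
        (1 / 2 : ℝ) * (μ Set.univ).toReal ∧
      ∀ (g : M → ℝ), ContMDiff (𝓡 m) 𝓘(ℝ) (⊤ : ℕ∞) g →
        ∀ (Dg : M → Fin m → ℝ),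
          (∀ α, ContMDiff (𝓡 m) 𝓘(ℝ) (⊤ : ℕ∞) fun a => Dg a α) →
          (∀ a : M, coProd (φinv a) (A a) (Dg a) ≠ 0) →
          (1 / 2 : ℝ) * ∫ a, (coProd (φinv a) (A a) (A a) /
              (coProd (φinv a) (A a) (Df a)) ^ 2) * coProd (φinv a) (Df a) (Df a) ∂μ ≤
            (1 / 2 : ℝ) * ∫ a, (coProd (φinv a) (A a) (A a) /
              (coProd (φinv a) (A a) (Dg a)) ^ 2) * coProd (φinv a) (Dg a) (Dg a) ∂μ := by
  -- the integrand of `L_A(f)` is identically 1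
  have hFone : ∀ a : M, (coProd (φinv a) (A a) (A a) /
      (coProd (φinv a) (A a) (Df a)) ^ 2) * coProd (φinv a) (Df a) (Df a) = 1 := by
    intro a
    have hAA : coProd (φinv a) (A a) (A a) ≠ 0 := by
      have := hne a; rwa [hE a] at this
    rw [hE a]
    field_simp
  have h1 : (∫ a, (coProd (φinv a) (A a) (A a) /
      (coProd (φinv a) (A a) (Df a)) ^ 2) * coProd (φinv a) (Df a) (Df a) ∂μ)
      = (μ Set.univ).toReal := by
    rw [show (fun a => (coProd (φinv a) (A a) (A a) /
        (coProd (φinv a) (A a) (Df a)) ^ 2) * coProd (φinv a) (Df a) (Df a))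
        = fun _ : M => (1 : ℝ) from funext hFone]
    simp [Measure.real]
  constructor
  · rw [h1]
  · intro g hg Dg hDg hgne
    rw [h1]
    -- the integrand of `L_A(g)` is everywhere ≥ 1, by Cauchy–Schwarz
    set G : M → ℝ := fun a => (coProd (φinv a) (A a) (A a) /
        (coProd (φinv a) (A a) (Dg a)) ^ 2) * coProd (φinv a) (Dg a) (Dg a) with hGdef
    have hGge : ∀ a : M, (1 : ℝ) ≤ G a := by
      intro a
      have hd : (0 : ℝ) < (coProd (φinv a) (A a) (Dg a)) ^ 2 :=
        pow_two_pos_of_ne_zero (hgne a)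
      have hcs := coProd_cs' (hφpos a).posSemidef (A a) (Dg a)
      have : (1 : ℝ) ≤ (coProd (φinv a) (A a) (A a) * coProd (φinv a) (Dg a) (Dg a)) /
          (coProd (φinv a) (A a) (Dg a)) ^ 2 := by
        rw [le_div_iff₀ hd]; linarith
      calc (1 : ℝ) ≤ _ := this
        _ = G a := by rw [hGdef]; ring
    -- `G` is continuous, hence integrable on the compact `M`
    have hGcont : Continuous G := by
      have c1 := coProd_continuous' (u := A) (v := A)
        (fun α β => (hφsmooth α β).continuous) (fun α => (hA α).continuous)
        (fun α => (hA α).continuous)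
      have c2 := coProd_continuous' (u := A) (v := Dg)
        (fun α β => (hφsmooth α β).continuous) (fun α => (hA α).continuous)
        (fun α => (hDg α).continuous)
      have c3 := coProd_continuous' (u := Dg) (v := Dg)
        (fun α β => (hφsmooth α β).continuous) (fun α => (hDg α).continuous)
        (fun α => (hDg α).continuous)
      exact ((c1.div (c2.pow 2) (fun a => pow_ne_zero 2 (hgne a))).mul c3)
    have hGint : Integrable G μ :=
      hGcont.integrable_of_hasCompactSupport (HasCompactSupport.of_compactSpace G)
    have hmono : (μ Set.univ).toReal ≤ ∫ a, G a ∂μ := by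
      have := integral_mono (integrable_const (1 : ℝ)) hGint hGge
      simpa [Measure.real] using this
    have : (1 / 2 : ℝ) * (μ Set.univ).toReal ≤ (1 / 2 : ℝ) * ∫ a, G a ∂μ := by linarith
    exact this
end

section
/- Let (M,φ) be a compact, connected, oriented Riemannian manifold, (N,ψ) a Riemannian manifold, ξ a smooth vector field on N and A a smooth 1-form on M, and set T^i_α(a,x) = ξ^i(x) A_α(a). If the smooth map f: M → N is a solution of the system ∂f^i/∂a^α = ξ^i(f(a)) A_α(a) with ⟨δf,T⟩ nowhere zero, then f is a global minimum of the functional L_T(g) = (1/2) ∫_M (‖ξ‖²_ψ ‖A‖²_φ / ⟨δg,T⟩²) φ^{αβ} ψ_{ij} g^i_α g^j_β √φ da over its domain, with L_T(f) = (1/2) Vol_φ(M). -/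
/- STATEMENT 7.
Coordinate presentation: `φinv a` is the inverse metric `φ^{αβ}` of the compact, connected,
oriented Riemannian manifold `(M,φ)` at `a`, `μ` its Riemannian volume measure `√φ da`,
`ψ x` the metric `ψ_{ij}` of the Riemannian manifold `(N,ψ)` at `x`, `ξ x` the components
`ξ^i(x)` of a smooth vector field on `N`, `A a` the components `A_α(a)` of a smooth 1-form
on `M`, and `Df a` the components `f^i_α = ∂f^i/∂a^α` of the differential `δf`.
The decomposable tensor is `T^i_α(a,x) = ξ^i(x) A_α(a)`; the pointwise scalar product is
`⟨T,S⟩ = φ^{αβ} ψ_{ij} T^i_α S^j_β`, `‖ξ‖²_ψ = ψ_{ij} ξ^i ξ^j`, `‖A‖²_φ = φ^{αβ} A_α A_β`. -/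

open scoped Manifold
open MeasureTheory

/-- `‖ξ‖²_ψ = ψ_{ij} ξ^i ξ^j`. -/
noncomputable def vecNormSq {n : ℕ} (ψ : Matrix (Fin n) (Fin n) ℝ)
    (ξ : Fin n → ℝ) : ℝ :=
  ∑ i : Fin n, ∑ j : Fin n, ψ i j * ξ i * ξ j

/-- `‖A‖²_φ = φ^{αβ} A_α A_β`. -/
noncomputable def coNormSq {m : ℕ} (φinv : Matrix (Fin m) (Fin m) ℝ)
    (A : Fin m → ℝ) : ℝ :=
  ∑ α : Fin m, ∑ β : Fin m, φinv α β * A α * A β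

/-- decomposable: `⟨ξ⊗A, ξ⊗A⟩ = ‖ξ‖²_ψ ‖A‖²_φ`. -/
lemma glProd_decomp {m n : ℕ} (φinv : Matrix (Fin m) (Fin m) ℝ)
    (ψ : Matrix (Fin n) (Fin n) ℝ) (ξ : Fin n → ℝ) (A : Fin m → ℝ) :
    glProd φinv ψ (fun i α => ξ i * A α) (fun i α => ξ i * A α)
      = vecNormSq ψ ξ * coNormSq φinv A := by
  unfold glProd vecNormSq coNormSq
  have h : ∀ α β, (∑ i : Fin n, ∑ j : Fin n,
      φinv α β * ψ i j * (ξ i * A α) * (ξ j * A β))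
      = (φinv α β * A α * A β) * ∑ i : Fin n, ∑ j : Fin n, ψ i j * ξ i * ξ j := by
    intro α β
    rw [Finset.mul_sum]
    refine Finset.sum_congr rfl fun i _ => ?_
    rw [Finset.mul_sum]
    exact Finset.sum_congr rfl fun j _ => by ring
  simp_rw [h, ← Finset.sum_mul]
  ring

open scoped Kronecker in
open Matrix in
/-- nonnegativity of the pointwise scalar product. -/
lemma glProd_self_nonneg_s7 {m n : ℕ} {φinv : Matrix (Fin m) (Fin m) ℝ}
    {ψ : Matrix (Fin n) (Fin n) ℝ} (hφ : φinv.PosSemidef) (hψ : ψ.PosSemidef)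
    (S : Fin n → Fin m → ℝ) : 0 ≤ glProd φinv ψ S S := by
  obtain ⟨C, hC⟩ : ∃ C, _ = Cᴴ * C := by
    open scoped MatrixOrder in exact CStarAlgebra.nonneg_iff_eq_star_mul_self.mp hφ.nonneg
  obtain ⟨D, hD⟩ : ∃ D, _ = Dᴴ * D := by
    open scoped MatrixOrder in exact CStarAlgebra.nonneg_iff_eq_star_mul_self.mp hψ.nonneg
  have hK : (φinv ⊗ₖ ψ).PosSemidef := by
    have h2 : (C ⊗ₖ D)ᴴ = Cᴴ ⊗ₖ Dᴴ := by
      rw [Matrix.conjTranspose_eq_transpose_of_trivial,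
        Matrix.conjTranspose_eq_transpose_of_trivial,
        Matrix.conjTranspose_eq_transpose_of_trivial,
        Matrix.kroneckerMap_transpose]
    have h1 : φinv ⊗ₖ ψ = (C ⊗ₖ D)ᴴ * (C ⊗ₖ D) := by
      rw [hC, hD, Matrix.mul_kronecker_mul, ← h2]
    rw [h1]
    exact Matrix.posSemidef_conjTranspose_mul_self _
  have hid : glProd φinv ψ S S
      = dotProduct (star (fun p : Fin m × Fin n => S p.2 p.1))
          ((φinv ⊗ₖ ψ) *ᵥ (fun p : Fin m × Fin n => S p.2 p.1)) := by
    unfold glProd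
    simp only [dotProduct, Matrix.mulVec, Fintype.sum_prod_type,
      Matrix.kroneckerMap_apply, Finset.mul_sum, star_trivial, Pi.star_apply]
    refine Finset.sum_congr rfl fun α _ => ?_
    rw [Finset.sum_comm]
    refine Finset.sum_congr rfl fun i _ => Finset.sum_congr rfl fun β _ =>
      Finset.sum_congr rfl fun j _ => by ring
  rw [hid]
  exact hK.dotProduct_mulVec_nonneg _

/-- symmetry of the pointwise scalar product. -/
lemma glProd_comm {m n : ℕ} {φinv : Matrix (Fin m) (Fin m) ℝ}
    {ψ : Matrix (Fin n) (Fin n) ℝ}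
    (hφs : ∀ α β, φinv α β = φinv β α) (hψs : ∀ i j, ψ i j = ψ j i)
    (S T : Fin n → Fin m → ℝ) : glProd φinv ψ S T = glProd φinv ψ T S := by
  unfold glProd
  rw [Finset.sum_comm]
  refine Finset.sum_congr rfl fun β _ => Finset.sum_congr rfl fun α _ => ?_
  rw [Finset.sum_comm]
  refine Finset.sum_congr rfl fun j _ => Finset.sum_congr rfl fun i _ => ?_
  rw [hφs, hψs]
  ring

/-- Cauchy–Schwarz for the pointwise scalar product. -/
lemma glProd_sq_le_s7 {m n : ℕ} {φinv : Matrix (Fin m) (Fin m) ℝ}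
    {ψ : Matrix (Fin n) (Fin n) ℝ} (hφ : φinv.PosSemidef) (hψ : ψ.PosSemidef)
    (S T : Fin n → Fin m → ℝ) :
    (glProd φinv ψ S T) ^ 2 ≤ glProd φinv ψ S S * glProd φinv ψ T T := by
  have hφs : ∀ α β, φinv α β = φinv β α := fun α β => by
    simpa using (hφ.1.apply α β).symm
  have hψs : ∀ i j, ψ i j = ψ j i := fun i j => by
    simpa using (hψ.1.apply i j).symm
  have hquad : ∀ t : ℝ, 0 ≤ glProd φinv ψ T T * (t * t)
      + (2 * glProd φinv ψ S T) * t + glProd φinv ψ S S := by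
    intro t
    have h0 := glProd_self_nonneg_s7 hφ hψ (fun i α => S i α + t * T i α)
    have hexp : glProd φinv ψ (fun i α => S i α + t * T i α)
        (fun i α => S i α + t * T i α)
        = glProd φinv ψ S S + t * glProd φinv ψ S T + t * glProd φinv ψ T S
          + t * t * glProd φinv ψ T T := by
      unfold glProd
      have e : ∀ (α β : Fin m) (i j : Fin n),
          φinv α β * ψ i j * (S i α + t * T i α) * (S j β + t * T j β)
          = φinv α β * ψ i j * S i α * S j β
            + t * (φinv α β * ψ i j * S i α * T j β)
            + t * (φinv α β * ψ i j * T i α * S j β)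
            + t * t * (φinv α β * ψ i j * T i α * T j β) := fun α β i j => by
        ring
      simp_rw [e, Finset.sum_add_distrib, ← Finset.mul_sum]
    rw [glProd_comm hφs hψs T S] at hexp
    rw [hexp] at h0
    linarith
  have hd := discrim_le_zero hquad
  rw [discrim] at hd
  nlinarith [hd]

/-- A solution `f` of `∂f^i/∂a^α = ξ^i(f(a)) A_α(a)` with `⟨δf,T⟩`
nowhere zero is a global minimum of
`L_T(g) = (1/2)∫_M (‖ξ‖²_ψ ‖A‖²_φ / ⟨δg,T⟩²) φ^{αβ} ψ_{ij} g^i_α g^j_β √φ da`,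
with `L_T(f) = (1/2) Vol_φ(M)`. -/
theorem pseudolinear_solution_minimizes {m n : ℕ} {M N : Type*}
    -- (M,φ) a compact, connected, oriented Riemannian manifold
    [TopologicalSpace M] [ChartedSpace (EuclideanSpace ℝ (Fin m)) M]
    [IsManifold (𝓡 m) (⊤ : ℕ∞) M] [CompactSpace M] [ConnectedSpace M]
    [MeasurableSpace M] [BorelSpace M]
    -- (N,ψ) a Riemannian manifold
    [TopologicalSpace N] [ChartedSpace (EuclideanSpace ℝ (Fin n)) N]
    [IsManifold (𝓡 n) (⊤ : ℕ∞) N]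
    (φinv : M → Matrix (Fin m) (Fin m) ℝ)
    (hφpos : ∀ a, (φinv a).PosDef)
    (hφsmooth : ∀ α β, ContMDiff (𝓡 m) 𝓘(ℝ) (⊤ : ℕ∞) fun a => φinv a α β)
    (ψ : N → Matrix (Fin n) (Fin n) ℝ)
    (hψpos : ∀ x, (ψ x).PosDef)
    (hψsmooth : ∀ i j, ContMDiff (𝓡 n) 𝓘(ℝ) (⊤ : ℕ∞) fun x => ψ x i j)
    -- the Riemannian volume measure √φ da of the compact oriented (M,φ)
    (μ : Measure M) [IsFiniteMeasure μ] [μ.IsOpenPosMeasure]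
    -- ξ a smooth vector field on N and A a smooth 1-form on M
    (ξ : N → Fin n → ℝ) (hξ : ∀ i, ContMDiff (𝓡 n) 𝓘(ℝ) (⊤ : ℕ∞) fun x => ξ x i)
    (A : M → Fin m → ℝ) (hA : ∀ α, ContMDiff (𝓡 m) 𝓘(ℝ) (⊤ : ℕ∞) fun a => A a α)
    -- the decomposable tensor T^i_α(a,x) = ξ^i(x) A_α(a)
    (T : M → N → Fin n → Fin m → ℝ)
    (hTdef : ∀ a x i α, T a x i α = ξ x i * A a α)
    -- f : M → N smooth, with the components Df = (f^i_α) of its differential δf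
    (f : M → N) (hf : ContMDiff (𝓡 m) (𝓡 n) (⊤ : ℕ∞) f)
    (Df : M → Fin n → Fin m → ℝ)
    (hDf : ∀ i α, ContMDiff (𝓡 m) 𝓘(ℝ) (⊤ : ℕ∞) fun a => Df a i α)
    -- f solves the system ∂f^i/∂a^α = ξ^i(f(a)) A_α(a)
    (hE : ∀ a i α, Df a i α = ξ (f a) i * A a α)
    -- ⟨δf, T⟩ nowhere zero
    (hne : ∀ a : M, glProd (φinv a) (ψ (f a)) (Df a) (T a (f a)) ≠ 0) :
    (1 / 2 : ℝ) * ∫ a, (vecNormSq (ψ (f a)) (ξ (f a)) * coNormSq (φinv a) (A a) /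
          (glProd (φinv a) (ψ (f a)) (Df a) (T a (f a))) ^ 2) *
          glProd (φinv a) (ψ (f a)) (Df a) (Df a) ∂μ =
        (1 / 2 : ℝ) * (μ Set.univ).toReal ∧
      ∀ (g : M → N), ContMDiff (𝓡 m) (𝓡 n) (⊤ : ℕ∞) g →
        ∀ (Dg : M → Fin n → Fin m → ℝ),
          (∀ i α, ContMDiff (𝓡 m) 𝓘(ℝ) (⊤ : ℕ∞) fun a => Dg a i α) →
          (∀ a : M, glProd (φinv a) (ψ (g a)) (Dg a) (T a (g a)) ≠ 0) →
          (1 / 2 : ℝ) * ∫ a, (vecNormSq (ψ (f a)) (ξ (f a)) * coNormSq (φinv a) (A a) /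
              (glProd (φinv a) (ψ (f a)) (Df a) (T a (f a))) ^ 2) *
              glProd (φinv a) (ψ (f a)) (Df a) (Df a) ∂μ ≤
            (1 / 2 : ℝ) * ∫ a, (vecNormSq (ψ (g a)) (ξ (g a)) * coNormSq (φinv a) (A a) /
              (glProd (φinv a) (ψ (g a)) (Dg a) (T a (g a))) ^ 2) *
              glProd (φinv a) (ψ (g a)) (Dg a) (Dg a) ∂μ := by
  -- the f-integrand is constantly 1
  have hDfeq : ∀ a, Df a = fun i α => ξ (f a) i * A a α := fun a =>
    funext fun i => funext fun α => hE a i α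
  have hTfeq : ∀ a, T a (f a) = fun i α => ξ (f a) i * A a α := fun a =>
    funext fun i => funext fun α => hTdef a (f a) i α
  have hc : ∀ a, glProd (φinv a) (ψ (f a)) (Df a) (T a (f a))
      = vecNormSq (ψ (f a)) (ξ (f a)) * coNormSq (φinv a) (A a) := fun a => by
    rw [hDfeq a, hTfeq a]; exact glProd_decomp _ _ _ _
  have hcc : ∀ a, glProd (φinv a) (ψ (f a)) (Df a) (Df a)
      = vecNormSq (ψ (f a)) (ξ (f a)) * coNormSq (φinv a) (A a) := fun a => by
    rw [hDfeq a]; exact glProd_decomp _ _ _ _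
  have hone : ∀ a, (vecNormSq (ψ (f a)) (ξ (f a)) * coNormSq (φinv a) (A a) /
      (glProd (φinv a) (ψ (f a)) (Df a) (T a (f a))) ^ 2) *
      glProd (φinv a) (ψ (f a)) (Df a) (Df a) = 1 := fun a => by
    have hc0 : vecNormSq (ψ (f a)) (ξ (f a)) * coNormSq (φinv a) (A a) ≠ 0 :=
      hc a ▸ hne a
    rw [hc a, hcc a]
    field_simp
    exact div_self hc0
  have h1 : ∫ a, (vecNormSq (ψ (f a)) (ξ (f a)) * coNormSq (φinv a) (A a) /
      (glProd (φinv a) (ψ (f a)) (Df a) (T a (f a))) ^ 2) *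
      glProd (φinv a) (ψ (f a)) (Df a) (Df a) ∂μ = (μ Set.univ).toReal := by
    rw [integral_congr_ae (Filter.Eventually.of_forall fun a => hone a)]
    simp [integral_const, Measure.real]
  refine ⟨by rw [h1], ?_⟩
  intro g hg Dg hDg hgne
  rw [h1]
  apply mul_le_mul_of_nonneg_left _ (by norm_num : (0:ℝ) ≤ 1/2)
  -- pointwise: g-integrand ≥ 1
  have hTgeq : ∀ a, T a (g a) = fun i α => ξ (g a) i * A a α := fun a =>
    funext fun i => funext fun α => hTdef a (g a) i α
  have hP : ∀ a, glProd (φinv a) (ψ (g a)) (T a (g a)) (T a (g a))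
      = vecNormSq (ψ (g a)) (ξ (g a)) * coNormSq (φinv a) (A a) := fun a => by
    rw [hTgeq a]; exact glProd_decomp _ _ _ _
  have hpt : ∀ a, (1:ℝ) ≤ (vecNormSq (ψ (g a)) (ξ (g a)) * coNormSq (φinv a) (A a) /
      (glProd (φinv a) (ψ (g a)) (Dg a) (T a (g a))) ^ 2) *
      glProd (φinv a) (ψ (g a)) (Dg a) (Dg a) := by
    intro a
    have hcs := glProd_sq_le_s7 (hφpos a).posSemidef (hψpos (g a)).posSemidef
      (Dg a) (T a (g a))
    rw [hP a] at hcs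
    have hB2 : (0:ℝ) < (glProd (φinv a) (ψ (g a)) (Dg a) (T a (g a))) ^ 2 :=
      pow_two_pos_of_ne_zero (hgne a)
    rw [div_mul_eq_mul_div, le_div_iff₀ hB2, one_mul]
    nlinarith [hcs]
  -- integrability of the g-integrand
  have : IsFiniteMeasureOnCompacts μ := ⟨fun _ _ => measure_lt_top μ _⟩
  have hφc : ∀ α β, Continuous fun a => φinv a α β := fun α β =>
    (hφsmooth α β).continuous
  have hψgc : ∀ i j, Continuous fun a => ψ (g a) i j := fun i j =>
    (hψsmooth i j).continuous.comp hg.continuous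
  have hξgc : ∀ i, Continuous fun a => ξ (g a) i := fun i =>
    (hξ i).continuous.comp hg.continuous
  have hAc : ∀ α, Continuous fun a => A a α := fun α => (hA α).continuous
  have hTgc : ∀ i α, Continuous fun a => T a (g a) i α := fun i α => by
    simp_rw [hTdef]
    exact (hξgc i).mul (hAc α)
  have hDgc : ∀ i α, Continuous fun a => Dg a i α := fun i α =>
    (hDg i α).continuous
  have hglc : ∀ (S R : M → Fin n → Fin m → ℝ),
      (∀ i α, Continuous fun a => S a i α) →
      (∀ i α, Continuous fun a => R a i α) →
      Continuous fun a => glProd (φinv a) (ψ (g a)) (S a) (R a) := by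
    intro S R hS hR
    unfold glProd
    refine continuous_finset_sum _ fun α _ => continuous_finset_sum _ fun β _ =>
      continuous_finset_sum _ fun i _ => continuous_finset_sum _ fun j _ => ?_
    exact (((hφc α β).mul (hψgc i j)).mul (hS i α)).mul (hR j β)
  have hVc : Continuous fun a => vecNormSq (ψ (g a)) (ξ (g a)) := by
    unfold vecNormSq
    refine continuous_finset_sum _ fun i _ => continuous_finset_sum _ fun j _ => ?_
    exact ((hψgc i j).mul (hξgc i)).mul (hξgc j)
  have hCc : Continuous fun a => coNormSq (φinv a) (A a) := by
    unfold coNormSq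
    refine continuous_finset_sum _ fun α _ => continuous_finset_sum _ fun β _ => ?_
    exact ((hφc α β).mul (hAc α)).mul (hAc β)
  have hBc : Continuous fun a => glProd (φinv a) (ψ (g a)) (Dg a) (T a (g a)) :=
    hglc Dg (fun a => T a (g a)) hDgc hTgc
  have hQc : Continuous fun a => glProd (φinv a) (ψ (g a)) (Dg a) (Dg a) :=
    hglc Dg Dg hDgc hDgc
  have hcont : Continuous fun a =>
      (vecNormSq (ψ (g a)) (ξ (g a)) * coNormSq (φinv a) (A a) /
        (glProd (φinv a) (ψ (g a)) (Dg a) (T a (g a))) ^ 2) *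
      glProd (φinv a) (ψ (g a)) (Dg a) (Dg a) :=
    (((hVc.mul hCc).div (hBc.pow 2)
      (fun a => pow_ne_zero 2 (hgne a))).mul hQc)
  have hint : Integrable (fun a =>
      (vecNormSq (ψ (g a)) (ξ (g a)) * coNormSq (φinv a) (A a) /
        (glProd (φinv a) (ψ (g a)) (Dg a) (T a (g a))) ^ 2) *
      glProd (φinv a) (ψ (g a)) (Dg a) (Dg a)) μ :=
    hcont.integrable_of_hasCompactSupport (HasCompactSupport.of_compactSpace _)
  calc (μ Set.univ).toReal = ∫ _, (1:ℝ) ∂μ := by simp [integral_const, Measure.real]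
    _ ≤ _ := integral_mono (integrable_const 1) hint hpt
end
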